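/- Let d ≥ 2 be an integer and let K, L, M, N be Hermitian matrices on ℂ^{d_Â}⊗ℂ^{d_B̂}. On the space with tensor factors A, B, Â, B̂, A', B' (A, B, A', B' each of dimension d), define P := Γ_{AB'}⊗Γ_{BA'}⊗K + Γ_{AB'}⊗((d·I−Γ)_{BA'}/(d²−1))⊗L + ((d·I−Γ)_{AB'}/(d²−1))⊗Γ_{BA'}⊗M + ((d·I−Γ)_{AB'}/(d²−1))⊗((d·I−Γ)_{BA'}/(d²−1))⊗N, where Γ_{AB'} denotes the unnormalized maximally entangled operator placed on the factors A and B', and Γ_{BA'} that placed on B and A'. Then T_{BB̂B'}(P) is positive semidefinite if and only if the following four conditions hold: T_B̂(K + L/(d+1) + M/(d+1) + N/(d+1)²) ≥ 0; (1/(d−1))·T_B̂(L + N/(d+1)) ≥ T_B̂(K + M/(d+1)); (1/(d−1))·T_B̂(M + N/(d+1)) ≥ T_B̂(K + L/(d+1)); and T_B̂(K + N/(d−1)²) ≥ (1/(d−1))·T_B̂(L + M). -/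

import Mathlib

open Matrix Kronecker
open scoped ComplexOrder

noncomputable section

/-- Square root of a positive semidefinite matrix, as `PosSemidef.sqrt` was defined in the older Mathlib. -/
def psdSqrt {n : Type*} [Fintype n] [DecidableEq n] {A : Matrix n n ℂ} (hA : A.PosSemidef) :
    Matrix n n ℂ :=
  (hA.1.eigenvectorUnitary : Matrix n n ℂ) *
    diagonal ((↑) ∘ Real.sqrt ∘ hA.1.eigenvalues) * (star hA.1.eigenvectorUnitary : Matrix n n ℂ)

/-- The trace norm `‖X‖₁ = Tr[√(X†X)]`. -/
def traceNorm {n : Type*} [Fintype n] [DecidableEq n] (X : Matrix n n ℂ) : ℝ :=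
  ((psdSqrt (Matrix.posSemidef_conjTranspose_mul_self X)).trace).re

/-- The extension `id_k ⊗ Φ` of a map on matrices, with the identity on the first factor. -/
def idTensor {k n m : Type*} (Φ : Matrix n n ℂ → Matrix m m ℂ)
    (M : Matrix (k × n) (k × n) ℂ) : Matrix (k × m) (k × m) ℂ :=
  Matrix.of fun p q => Φ (Matrix.of fun a b => M (p.1, a) (q.1, b)) p.2 q.2

/-- A density matrix: positive semidefinite with unit trace. -/
def IsState {n : Type*} [Fintype n] (ρ : Matrix n n ℂ) : Prop :=
  ρ.PosSemidef ∧ ρ.trace = 1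

/-- Normalized diamond distance between two maps on matrices, as the supremum over
bipartite input states (with a reference system of the same dimension as the input)
of the normalized trace distance of the outputs. -/
def dDist {n m : Type*} [Fintype n] [DecidableEq n] [Fintype m] [DecidableEq m]
    (N M : Matrix n n ℂ → Matrix m m ℂ) : ℝ :=
  sSup {x : ℝ | ∃ ρ : Matrix (n × n) (n × n) ℂ, IsState ρ ∧
    x = (1 / 2) * traceNorm (idTensor N ρ - idTensor M ρ)}

/-- Complete positivity of a linear map on matrices: every finite identity extension
preserves positive semidefiniteness. -/
def IsCP {n m : Type*} [Fintype n] [DecidableEq n] [Fintype m] [DecidableEq m]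
    (Φ : Matrix n n ℂ →ₗ[ℂ] Matrix m m ℂ) : Prop :=
  ∀ (r : ℕ) (M : Matrix (Fin r × n) (Fin r × n) ℂ), M.PosSemidef →
    (idTensor (fun X => Φ X) M).PosSemidef

/-- Trace preservation of a linear map on matrices. -/
def IsTP {n m : Type*} [Fintype n] [Fintype m]
    (Φ : Matrix n n ℂ →ₗ[ℂ] Matrix m m ℂ) : Prop :=
  ∀ X, (Φ X).trace = X.trace

/-- Choi operator of a map on matrices: `Γ^Φ = Σ_{i,j} |i⟩⟨j| ⊗ Φ(|i⟩⟨j|)`. -/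
def choi {n m : Type*} [DecidableEq n]
    (Φ : Matrix n n ℂ → Matrix m m ℂ) : Matrix (n × m) (n × m) ℂ :=
  Matrix.of fun p q => Φ (Matrix.single p.1 q.1 1) p.2 q.2

/-- The swap operator `F = Σ_{i,j} |i⟩⟨j| ⊗ |j⟩⟨i|` on `ℂ^d ⊗ ℂ^d`. -/
def swapOp (d : ℕ) : Matrix (Fin d × Fin d) (Fin d × Fin d) ℂ :=
  Matrix.of fun p q => if p.1 = q.2 ∧ p.2 = q.1 then 1 else 0

/-- The swap channel `S^d(X) = F X F†`. -/
def swapCh (d : ℕ) (X : Matrix (Fin d × Fin d) (Fin d × Fin d) ℂ) :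
    Matrix (Fin d × Fin d) (Fin d × Fin d) ℂ :=
  swapOp d * X * (swapOp d)ᴴ

/-- Square root of a positive semidefinite matrix (junk value `0` otherwise). -/
def msqrt {n : Type*} [Fintype n] [DecidableEq n] (X : Matrix n n ℂ) : Matrix n n ℂ :=
  letI := Classical.propDecidable X.PosSemidef
  if h : X.PosSemidef then psdSqrt h else 0

/-- Fidelity `F(ω,τ) = ‖√ω √τ‖₁²`. -/
def fid {n : Type*} [Fintype n] [DecidableEq n] (ω τ : Matrix n n ℂ) : ℝ :=
  (traceNorm (msqrt ω * msqrt τ)) ^ 2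

/-- Channel fidelity: the infimum of output fidelities over bipartite input states. -/
def cFid {n m : Type*} [Fintype n] [DecidableEq n] [Fintype m] [DecidableEq m]
    (N M : Matrix n n ℂ → Matrix m m ℂ) : ℝ :=
  sInf {x : ℝ | ∃ ρ : Matrix (n × n) (n × n) ℂ, IsState ρ ∧
    x = fid (idTensor N ρ) (idTensor M ρ)}

/-- Partial trace over the second (right) factor. -/
def ptrR {a b : Type*} [Fintype b] (X : Matrix (a × b) (a × b) ℂ) : Matrix a a ℂ :=
  Matrix.of fun i j => ∑ k, X (i, k) (j, k)

/-- Unnormalized maximally entangled operator `Γ = |Γ⟩⟨Γ|` on `ℂ^D ⊗ ℂ^D`. -/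
def gamOp (D : ℕ) : Matrix (Fin D × Fin D) (Fin D × Fin D) ℂ :=
  Matrix.of fun p q => if p.1 = p.2 ∧ q.1 = q.2 then 1 else 0

/-- Maximally entangled state `Φ = Γ/D` on `ℂ^D ⊗ ℂ^D`. -/
def phiD (D : ℕ) : Matrix (Fin D × Fin D) (Fin D × Fin D) ℂ :=
  ((D : ℂ))⁻¹ • gamOp D

/-- Partial transpose over Bob's factors `B, B̂, B'` of a matrix on the six factors
`(A ⊗ B) ⊗ (Â ⊗ B̂) ⊗ (A' ⊗ B')`. -/
def ptB6 {A B AH BH A' B' : Type*}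
    (X : Matrix (((A × B) × (AH × BH)) × (A' × B')) (((A × B) × (AH × BH)) × (A' × B')) ℂ) :
    Matrix (((A × B) × (AH × BH)) × (A' × B')) (((A × B) × (AH × BH)) × (A' × B')) ℂ :=
  Matrix.of fun p q =>
    X (((p.1.1.1, q.1.1.2), (p.1.2.1, q.1.2.2)), (p.2.1, q.2.2))
      (((q.1.1.1, p.1.1.2), (q.1.2.1, p.1.2.2)), (q.2.1, p.2.2))

/-- Partial transpose over the factor `B̂` of a matrix on `Â ⊗ B̂`. -/
def ptBh2 {AH BH : Type*} (X : Matrix (AH × BH) (AH × BH) ℂ) : Matrix (AH × BH) (AH × BH) ℂ :=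
  Matrix.of fun g g' => X (g.1, g'.2) (g'.1, g.2)

/-- Contraction `Tr_{ÂB̂}[(T_{ÂB̂}(ρ) ⊗ I) P]` of a six-factor operator with a resource state,
yielding the Choi operator of the induced channel `ω ↦ P(ω ⊗ ρ)`. -/
def contractRes {A B AH BH A' B' : Type*} [Fintype AH] [Fintype BH]
    (ρ : Matrix (AH × BH) (AH × BH) ℂ)
    (P : Matrix (((A × B) × (AH × BH)) × (A' × B')) (((A × B) × (AH × BH)) × (A' × B')) ℂ) :
    Matrix ((A × B) × (A' × B')) ((A × B) × (A' × B')) ℂ :=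
  Matrix.of fun p q => ∑ h, ∑ h', ρ h h' * P ((p.1, h), p.2) ((q.1, h'), q.2)


/-- The six-factor operator `E1_{AB'} ⊗ E1_{BA'} ⊗ K + E1_{AB'} ⊗ E2_{BA'} ⊗ L
+ E2_{AB'} ⊗ E1_{BA'} ⊗ M + E2_{AB'} ⊗ E2_{BA'} ⊗ N` on the factors
`A, B, Â, B̂, A', B'` (with `E1, E2` placed on the indicated pairs of factors). -/
def bigOp (d : ℕ) {AH BH : Type*} (E1 E2 : Matrix (Fin d × Fin d) (Fin d × Fin d) ℂ)
    (K L M N : Matrix (AH × BH) (AH × BH) ℂ) :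
    Matrix (((Fin d × Fin d) × (AH × BH)) × (Fin d × Fin d))
      (((Fin d × Fin d) × (AH × BH)) × (Fin d × Fin d)) ℂ :=
  Matrix.of fun r c =>
    E1 (r.1.1.1, r.2.2) (c.1.1.1, c.2.2) * E1 (r.1.1.2, r.2.1) (c.1.1.2, c.2.1) * K r.1.2 c.1.2
    + E1 (r.1.1.1, r.2.2) (c.1.1.1, c.2.2) * E2 (r.1.1.2, r.2.1) (c.1.1.2, c.2.1) * L r.1.2 c.1.2
    + E2 (r.1.1.1, r.2.2) (c.1.1.1, c.2.2) * E1 (r.1.1.2, r.2.1) (c.1.1.2, c.2.1) * M r.1.2 c.1.2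
    + E2 (r.1.1.1, r.2.2) (c.1.1.1, c.2.2) * E2 (r.1.1.2, r.2.1) (c.1.1.2, c.2.1) * N r.1.2 c.1.2

namespace Stmt9Aux


/-- tensor product of vectors -/
def tensD {ι κ : Type*} (u : ι → ℂ) (v : κ → ℂ) : ι × κ → ℂ := fun p => u p.1 * v p.2

lemma kron_quad {ι κ : Type*} [Fintype ι] [Fintype κ]
    (A : Matrix ι ι ℂ) (B : Matrix κ κ ℂ) (u : ι → ℂ) (v : κ → ℂ) :
    star (tensD u v) ⬝ᵥ ((A ⊗ₖ B) *ᵥ tensD u v)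
      = (star u ⬝ᵥ A *ᵥ u) * (star v ⬝ᵥ B *ᵥ v) := by
  simp only [dotProduct, mulVec, tensD, kroneckerMap_apply, Pi.star_apply, star_mul',
    Fintype.sum_prod_type]
  rw [Finset.sum_mul_sum]
  refine Finset.sum_congr rfl fun x _ => ?_
  refine Finset.sum_congr rfl fun x1 _ => ?_
  conv_rhs => rw [mul_mul_mul_comm, Finset.sum_mul_sum]
  simp only [Finset.mul_sum]
  refine Finset.sum_congr rfl fun x2 _ => ?_
  refine Finset.sum_congr rfl fun x3 _ => ?_
  ring

lemma kron_conjTranspose {l m n p : Type*} (A : Matrix l m ℂ) (B : Matrix n p ℂ) :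
    (A ⊗ₖ B)ᴴ = Aᴴ ⊗ₖ Bᴴ := by
  ext ⟨i, j⟩ ⟨k, l'⟩
  simp [conjTranspose_apply, kroneckerMap_apply, star_mul', mul_comm]

lemma kron_psd {ι κ : Type*} [Fintype ι] [DecidableEq ι] [Fintype κ] [DecidableEq κ]
    {A : Matrix ι ι ℂ} {B : Matrix κ κ ℂ} (hA : A.PosSemidef) (hB : B.PosSemidef) :
    (A ⊗ₖ B).PosSemidef := by
  exact hA.kronecker hB

lemma psd_add {ι : Type*} [Fintype ι] {A B : Matrix ι ι ℂ}
    (hA : A.PosSemidef) (hB : B.PosSemidef) : (A + B).PosSemidef := by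
  exact hA.add hB

/-- symmetric projector -/
def Pp (d : ℕ) : Matrix (Fin d × Fin d) (Fin d × Fin d) ℂ := (2:ℂ)⁻¹ • (1 + swapOp d)

/-- antisymmetric projector -/
def Pm (d : ℕ) : Matrix (Fin d × Fin d) (Fin d × Fin d) ℂ := (2:ℂ)⁻¹ • (1 - swapOp d)

lemma swap_mulVec {d : ℕ} (x : Fin d × Fin d → ℂ) :
    swapOp d *ᵥ x = fun p => x (p.2, p.1) := by
  funext p
  simp [mulVec, dotProduct, swapOp, Fintype.sum_prod_type, ite_and]

lemma swap_herm {d : ℕ} : (swapOp d).IsHermitian := by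
  ext ⟨i, j⟩ ⟨k, l⟩
  simp only [conjTranspose_apply, swapOp, of_apply]
  split_ifs with h1 h2 h2 <;> simp_all <;> tauto

lemma swap_mul_self {d : ℕ} : swapOp d * swapOp d = 1 := by
  ext ⟨i, j⟩ ⟨k, l⟩
  simp [mul_apply, swapOp, Fintype.sum_prod_type, ite_and, one_apply, Prod.ext_iff,
    and_comm]

lemma Pp_herm {d : ℕ} : (Pp d).IsHermitian := by
  have h := swap_herm (d := d)
  unfold Matrix.IsHermitian at h ⊢
  simp [Pp, conjTranspose_smul, conjTranspose_add, h]

lemma Pm_herm {d : ℕ} : (Pm d).IsHermitian := by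
  have h := swap_herm (d := d)
  unfold Matrix.IsHermitian at h ⊢
  simp [Pm, conjTranspose_smul, conjTranspose_sub, h]

lemma Pp_mul_Pp {d : ℕ} : Pp d * Pp d = Pp d := by
  simp only [Pp, smul_mul_assoc, mul_smul_comm, add_mul, mul_add, one_mul, mul_one,
    swap_mul_self]
  ext p q
  simp only [Matrix.smul_apply, Matrix.add_apply, one_apply, smul_eq_mul]
  ring

lemma Pm_mul_Pm {d : ℕ} : Pm d * Pm d = Pm d := by
  simp only [Pm, smul_mul_assoc, mul_smul_comm, sub_mul, mul_sub, one_mul, mul_one,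
    swap_mul_self]
  ext p q
  simp only [Matrix.smul_apply, Matrix.sub_apply, one_apply, smul_eq_mul]
  ring

lemma Pp_psd {d : ℕ} : (Pp d).PosSemidef := by
  have h : Pp d = (Pp d)ᴴ * Pp d := by rw [Pp_herm, Pp_mul_Pp]
  rw [h]; exact Matrix.posSemidef_conjTranspose_mul_self _

lemma Pm_psd {d : ℕ} : (Pm d).PosSemidef := by
  have h : Pm d = (Pm d)ᴴ * Pm d := by rw [Pm_herm, Pm_mul_Pm]
  rw [h]; exact Matrix.posSemidef_conjTranspose_mul_self _

/-- symmetric test vector -/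
def xp (d : ℕ) (hd : 2 ≤ d) : Fin d × Fin d → ℂ :=
  fun p => if p = (⟨0, by omega⟩, ⟨0, by omega⟩) then 1 else 0

/-- antisymmetric test vector -/
def xm (d : ℕ) (hd : 2 ≤ d) : Fin d × Fin d → ℂ :=
  fun p => if p = (⟨0, by omega⟩, ⟨1, by omega⟩) then 1
    else if p = (⟨1, by omega⟩, ⟨0, by omega⟩) then -1 else 0

lemma xp_ne {d : ℕ} (hd : 2 ≤ d) : xp d hd ≠ 0 := by
  intro h
  have := congrFun h (⟨0, by omega⟩, ⟨0, by omega⟩)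
  simp [xp] at this

lemma xm_ne {d : ℕ} (hd : 2 ≤ d) : xm d hd ≠ 0 := by
  intro h
  have := congrFun h (⟨0, by omega⟩, ⟨1, by omega⟩)
  simp [xm] at this

lemma swap_xp {d : ℕ} (hd : 2 ≤ d) : swapOp d *ᵥ xp d hd = xp d hd := by
  rw [swap_mulVec]
  funext p
  obtain ⟨p1, p2⟩ := p
  simp only [xp, Prod.ext_iff]
  by_cases h1 : p1 = (⟨0, by omega⟩ : Fin d) <;> by_cases h2 : p2 = (⟨0, by omega⟩ : Fin d) <;>
    simp [h1, h2]

lemma swap_xm {d : ℕ} (hd : 2 ≤ d) : swapOp d *ᵥ xm d hd = -(xm d hd) := by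
  rw [swap_mulVec]
  funext p
  have h01 : (⟨0, by omega⟩ : Fin d) ≠ ⟨1, by omega⟩ := by
    simp [Fin.ext_iff]
  simp only [xm, Prod.ext_iff, Pi.neg_apply]
  obtain ⟨p1, p2⟩ := p
  by_cases h1 : p1 = (⟨0, by omega⟩ : Fin d) <;> by_cases h2 : p2 = (⟨0, by omega⟩ : Fin d) <;>
    by_cases h3 : p1 = (⟨1, by omega⟩ : Fin d) <;> by_cases h4 : p2 = (⟨1, by omega⟩ : Fin d) <;>
    simp_all <;> tauto

lemma Pp_xp {d : ℕ} (hd : 2 ≤ d) : Pp d *ᵥ xp d hd = xp d hd := by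
  simp only [Pp, smul_mulVec, add_mulVec, one_mulVec, swap_xp]
  funext p; simp only [Pi.smul_apply, Pi.add_apply, smul_eq_mul]; ring

lemma Pm_xp {d : ℕ} (hd : 2 ≤ d) : Pm d *ᵥ xp d hd = 0 := by
  simp only [Pm, smul_mulVec, sub_mulVec, one_mulVec, swap_xp]
  funext p; simp

lemma Pp_xm {d : ℕ} (hd : 2 ≤ d) : Pp d *ᵥ xm d hd = 0 := by
  simp only [Pp, smul_mulVec, add_mulVec, one_mulVec, swap_xm]
  funext p; simp

lemma Pm_xm {d : ℕ} (hd : 2 ≤ d) : Pm d *ᵥ xm d hd = xm d hd := by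
  simp only [Pm, smul_mulVec, sub_mulVec, one_mulVec, swap_xm]
  funext p; simp only [Pi.smul_apply, Pi.sub_apply, Pi.neg_apply, smul_eq_mul]; ring





lemma c_nonneg {c q : ℂ} (hc : 0 < c) (h : 0 ≤ c * q) : 0 ≤ q := by
  have hcre : 0 < c.re := (Complex.lt_def.mp hc).1
  have hcim : c.im = 0 := ((Complex.lt_def.mp hc).2).symm
  have h1 := (Complex.le_def.mp h).1
  have h2 := (Complex.le_def.mp h).2
  simp only [Complex.mul_re, Complex.mul_im, hcim, Complex.zero_re, Complex.zero_im,
    zero_mul, mul_zero, sub_zero, add_zero, zero_add] at h1 h2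
  rw [Complex.le_def, Complex.zero_re, Complex.zero_im]
  constructor
  · exact nonneg_of_mul_nonneg_right (by simpa [mul_comm] using h1) hcre
  · exact ((mul_eq_zero.mp h2.symm).resolve_left (ne_of_gt hcre)).symm

lemma sector_psd_iff {H : Type*} [Fintype H] [DecidableEq H] (d : ℕ) (hd : 2 ≤ d)
    {A B C E : Matrix H H ℂ} (hA : A.IsHermitian) (hB : B.IsHermitian)
    (hC : C.IsHermitian) (hE : E.IsHermitian) :
    (Pp d ⊗ₖ (Pp d ⊗ₖ A) + Pp d ⊗ₖ (Pm d ⊗ₖ B) + Pm d ⊗ₖ (Pp d ⊗ₖ C)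
      + Pm d ⊗ₖ (Pm d ⊗ₖ E)).PosSemidef
    ↔ A.PosSemidef ∧ B.PosSemidef ∧ C.PosSemidef ∧ E.PosSemidef := by
  constructor
  · intro hX
    have quad : ∀ (x y : Fin d × Fin d → ℂ) (w : H → ℂ), 0 ≤
        (star x ⬝ᵥ Pp d *ᵥ x) * ((star y ⬝ᵥ Pp d *ᵥ y) * (star w ⬝ᵥ A *ᵥ w))
        + (star x ⬝ᵥ Pp d *ᵥ x) * ((star y ⬝ᵥ Pm d *ᵥ y) * (star w ⬝ᵥ B *ᵥ w))
        + (star x ⬝ᵥ Pm d *ᵥ x) * ((star y ⬝ᵥ Pp d *ᵥ y) * (star w ⬝ᵥ C *ᵥ w))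
        + (star x ⬝ᵥ Pm d *ᵥ x) * ((star y ⬝ᵥ Pm d *ᵥ y) * (star w ⬝ᵥ E *ᵥ w)) := by
      intro x y w
      have h := hX.dotProduct_mulVec_nonneg (tensD x (tensD y w))
      simpa only [add_mulVec, dotProduct_add, kron_quad] using h
    have hpp : 0 < star (xp d hd) ⬝ᵥ xp d hd :=
      Matrix.dotProduct_star_self_pos_iff.mpr (xp_ne hd)
    have hmm : 0 < star (xm d hd) ⬝ᵥ xm d hd :=
      Matrix.dotProduct_star_self_pos_iff.mpr (xm_ne hd)
    refine ⟨Matrix.PosSemidef.of_dotProduct_mulVec_nonneg hA fun w => ?_, Matrix.PosSemidef.of_dotProduct_mulVec_nonneg hB fun w => ?_, Matrix.PosSemidef.of_dotProduct_mulVec_nonneg hC fun w => ?_, Matrix.PosSemidef.of_dotProduct_mulVec_nonneg hE fun w => ?_⟩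
    · have h := quad (xp d hd) (xp d hd) w
      rw [Pp_xp, Pm_xp] at h
      simp only [dotProduct_zero, zero_mul, mul_zero, add_zero, zero_add] at h
      exact c_nonneg hpp (c_nonneg hpp h)
    · have h := quad (xp d hd) (xm d hd) w
      rw [Pp_xp, Pm_xp, Pp_xm, Pm_xm] at h
      simp only [dotProduct_zero, zero_mul, mul_zero, add_zero, zero_add] at h
      exact c_nonneg hmm (c_nonneg hpp h)
    · have h := quad (xm d hd) (xp d hd) w
      rw [Pp_xp, Pm_xp, Pp_xm, Pm_xm] at h
      simp only [dotProduct_zero, zero_mul, mul_zero, add_zero, zero_add] at h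
      exact c_nonneg hpp (c_nonneg hmm h)
    · have h := quad (xm d hd) (xm d hd) w
      rw [Pp_xm, Pm_xm] at h
      simp only [dotProduct_zero, zero_mul, mul_zero, add_zero, zero_add] at h
      exact c_nonneg hmm (c_nonneg hmm h)
  · rintro ⟨h1, h2, h3, h4⟩
    exact psd_add (psd_add (psd_add (kron_psd Pp_psd (kron_psd Pp_psd h1))
      (kron_psd Pp_psd (kron_psd Pm_psd h2))) (kron_psd Pm_psd (kron_psd Pp_psd h3)))
      (kron_psd Pm_psd (kron_psd Pm_psd h4))





lemma scalar_key (x u1 u2 u3 u4 u5 u6 u7 u8 kk ll mm nn : ℂ)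
    (hm1 : x - 1 ≠ 0) (hp1 : x + 1 ≠ 0) :
    u1*u2*(u3*u4)*kk + u1*u2*((x^2-1)⁻¹*(x*(u5*u6) - u3*u4))*ll
    + (x^2-1)⁻¹*(x*(u7*u8) - u1*u2)*(u3*u4)*mm
    + (x^2-1)⁻¹*(x*(u7*u8) - u1*u2)*((x^2-1)⁻¹*(x*(u5*u6) - u3*u4))*nn
    = 2⁻¹*(u7*u8 + u1*u2)*(2⁻¹*(u5*u6 + u4*u3)*(kk + (x+1)⁻¹*ll + (x+1)⁻¹*mm + ((x+1)^2)⁻¹*nn))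
    + 2⁻¹*(u7*u8 + u1*u2)*(2⁻¹*(u5*u6 - u4*u3)*((x-1)⁻¹*(ll + (x+1)⁻¹*nn) - (kk + (x+1)⁻¹*mm)))
    + 2⁻¹*(u7*u8 - u1*u2)*(2⁻¹*(u5*u6 + u4*u3)*((x-1)⁻¹*(mm + (x+1)⁻¹*nn) - (kk + (x+1)⁻¹*ll)))
    + 2⁻¹*(u7*u8 - u1*u2)*(2⁻¹*(u5*u6 - u4*u3)*(kk + ((x-1)^2)⁻¹*nn - (x-1)⁻¹*(ll+mm))) := by
  have e1 : (x^2 - 1)⁻¹ = (x-1)⁻¹ * (x+1)⁻¹ := by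
    rw [show x^2 - 1 = (x-1)*(x+1) by ring, mul_inv]
  have e2 : ((x+1)^2)⁻¹ = (x+1)⁻¹ * (x+1)⁻¹ := by rw [sq, mul_inv]
  have e3 : ((x-1)^2)⁻¹ = (x-1)⁻¹ * (x-1)⁻¹ := by rw [sq, mul_inv]
  rw [e1, e2, e3]
  set i := (x-1)⁻¹ with hidef
  set j := (x+1)⁻¹ with hjdef
  have hi : (x - 1) * i = 1 := mul_inv_cancel₀ hm1
  have hj : (x + 1) * j = 1 := mul_inv_cancel₀ hp1
  linear_combination ((1/2 : ℂ)*j*u3*u4*u7*u8*mm + (1/2 : ℂ)*j*u1*u2*u5*u6*ll + (1/2 : ℂ)*j*u1*u2*u3*u4*mm + (1/2 : ℂ)*j*u1*u2*u3*u4*ll + (1/4 : ℂ)*j^2*u5*u6*u7*u8*nn + (1/4 : ℂ)*j^2*u3*u4*u7*u8*nn + (1/4 : ℂ)*j^2*u1*u2*u5*u6*nn + (1/4 : ℂ)*j^2*u1*u2*u3*u4*nn + (-1/4 : ℂ)*i*j*u5*u6*u7*u8*nn + (1/4 : ℂ)*i*j*u3*u4*u7*u8*nn + (1/4 : ℂ)*i*j*u1*u2*u5*u6*nn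 + (-1/4 : ℂ)*i*j*u1*u2*u3*u4*nn + (1/2 : ℂ)*i*j^2*u5*u6*u7*u8*nn + (-1/2 : ℂ)*i*j^2*u3*u4*u7*u8*nn + (-1/2 : ℂ)*i*j^2*u1*u2*u5*u6*nn + (-1/2 : ℂ)*i*j^2*u1*u2*u3*u4*nn + (1/1 : ℂ)*x*i*j^2*u5*u6*u7*u8*nn) * hi + ((1/2 : ℂ)*i*u3*u4*u7*u8*mm + (1/2 : ℂ)*i*u1*u2*u5*u6*ll + (-1/2 : ℂ)*i*u1*u2*u3*u4*mm + (-1/2 : ℂ)*i*u1*u2*u3*u4*ll + (3/4 : ℂ)*i*j*u5*u6*u7*u8*nn + (-1/4 : ℂ)*i*j*u3*u4*u7*u8*nn + (-1/4 : ℂ)*i*j*u1*u2*u5*u6*nn + (-1/4 : ℂ)*i*j*u1*u2*u3*u4*nn + (1/4 : ℂ)*i^2*u5*u6*u7*u8*nn + (-1/4 : ℂ)*i^2*u3*u4*u7*u8*nn + (-1/4 : ℂ)*i^2*u1*u2*u5*u6*nn + (1/4 : ℂ)*i^2*u1*u2*u3*u4*nn + (1/2 : ℂ)*i^2*j*u5*u6*u7*u8*nn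 + (-1/2 : ℂ)*i^2*j*u3*u4*u7*u8*nn + (-1/2 : ℂ)*i^2*j*u1*u2*u5*u6*nn + (1/2 : ℂ)*i^2*j*u1*u2*u3*u4*nn) * hj

lemma ite_and_mul (p q : Prop) [Decidable p] [Decidable q] :
    (if p ∧ q then (1:ℂ) else 0) = (if p then (1:ℂ) else 0) * (if q then (1:ℂ) else 0) := by
  by_cases hp : p <;> by_cases hq : q <;> simp [hp, hq]

/-- reindexing equivalence -/
def eqv (d : ℕ) (H : Type*) :
    (((Fin d × Fin d) × H) × (Fin d × Fin d)) ≃ ((Fin d × Fin d) × ((Fin d × Fin d) × H)) where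
  toFun r := ((r.1.1.1, r.2.2), ((r.1.1.2, r.2.1), r.1.2))
  invFun x := (((x.1.1, x.2.1.1), x.2.2), (x.2.1.2, x.1.2))
  left_inv _ := rfl
  right_inv _ := rfl

set_option maxHeartbeats 8000000 in
lemma key_eq (d : ℕ) (hd : 2 ≤ d) {AH BH : Type}
    [Fintype AH] [DecidableEq AH] [Fintype BH] [DecidableEq BH]
    (K L M N : Matrix (AH × BH) (AH × BH) ℂ) :
    ptB6 (bigOp d (gamOp d) ((((d : ℂ)) ^ 2 - 1)⁻¹ • ((d : ℂ) • 1 - gamOp d)) K L M N)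
      = (Pp d ⊗ₖ (Pp d ⊗ₖ (ptBh2 (K + ((d : ℂ) + 1)⁻¹ • L + ((d : ℂ) + 1)⁻¹ • M +
            (((d : ℂ) + 1) ^ 2)⁻¹ • N)))
        + Pp d ⊗ₖ (Pm d ⊗ₖ (((d : ℂ) - 1)⁻¹ • ptBh2 (L + ((d : ℂ) + 1)⁻¹ • N) -
            ptBh2 (K + ((d : ℂ) + 1)⁻¹ • M)))
        + Pm d ⊗ₖ (Pp d ⊗ₖ (((d : ℂ) - 1)⁻¹ • ptBh2 (M + ((d : ℂ) + 1)⁻¹ • N) -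
            ptBh2 (K + ((d : ℂ) + 1)⁻¹ • L)))
        + Pm d ⊗ₖ (Pm d ⊗ₖ (ptBh2 (K + (((d : ℂ) - 1) ^ 2)⁻¹ • N) -
            ((d : ℂ) - 1)⁻¹ • ptBh2 (L + M)))).submatrix (eqv d (AH × BH)) (eqv d (AH × BH)) := by
  have hm1 : ((d:ℂ) - 1) ≠ 0 := by
    intro h
    have h1 : (d:ℂ) = 1 := by linear_combination h
    have : d = 1 := by exact_mod_cast h1
    omega
  have hp1 : ((d:ℂ) + 1) ≠ 0 := by
    have h1 : ((d:ℂ) + 1) = ((d + 1 : ℕ) : ℂ) := by push_cast; ring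
    rw [h1]
    exact Nat.cast_ne_zero.mpr (Nat.succ_ne_zero d)
  have hsq : ((d:ℂ)^2 - 1) ≠ 0 := by
    have h1 : (d:ℂ)^2 - 1 = ((d:ℂ) - 1) * ((d:ℂ) + 1) := by ring
    rw [h1]
    exact mul_ne_zero hm1 hp1
  ext ⟨⟨⟨a, b⟩, k1, k2⟩, a', b'⟩ ⟨⟨⟨c, e⟩, l1, l2⟩, c', e'⟩
  simp only [ptB6, bigOp, gamOp, ptBh2, Pp, Pm, swapOp, eqv, Matrix.of_apply,
    Matrix.submatrix_apply, Matrix.add_apply, Matrix.sub_apply, Matrix.smul_apply,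
    Matrix.kroneckerMap_apply, Matrix.one_apply, smul_eq_mul, Equiv.coe_fn_mk,
    Prod.mk.injEq, ite_and_mul, eq_comm]
  exact scalar_key ((d : ℕ) : ℂ) _ _ _ _ _ _ _ _ _ _ _ _ hm1 hp1





lemma ptBh2_herm {AH BH : Type*} {K : Matrix (AH × BH) (AH × BH) ℂ} (hK : K.IsHermitian) :
    (ptBh2 K).IsHermitian := by
  ext ⟨g1, g2⟩ ⟨g1', g2'⟩
  simp only [conjTranspose_apply, ptBh2, of_apply]
  exact hK.apply _ _

lemma herm_smul {n : Type*} {c : ℂ} (hc : star c = c) {A : Matrix n n ℂ}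
    (hA : A.IsHermitian) : (c • A).IsHermitian := by
  unfold Matrix.IsHermitian at *
  rw [Matrix.conjTranspose_smul, hA, hc]

lemma star_cast_add_one_inv (d : ℕ) : star (((d : ℂ) + 1)⁻¹) = ((d : ℂ) + 1)⁻¹ := by
  simp

lemma star_cast_add_one_sq_inv (d : ℕ) :
    star ((((d : ℂ) + 1) ^ 2)⁻¹) = (((d : ℂ) + 1) ^ 2)⁻¹ := by
  simp

lemma star_cast_sub_one_inv (d : ℕ) : star (((d : ℂ) - 1)⁻¹) = ((d : ℂ) - 1)⁻¹ := by
  simp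

lemma star_cast_sub_one_sq_inv (d : ℕ) :
    star ((((d : ℂ) - 1) ^ 2)⁻¹) = (((d : ℂ) - 1) ^ 2)⁻¹ := by
  simp



end Stmt9Aux

/-- the partial transpose over Bob's factors of the symmetrized six-factor
operator built from `Γ` and `(d·I − Γ)/(d² − 1)` is positive semidefinite if and only if
the four stated operator inequalities hold. -/
theorem stmt9 (d : ℕ) (hd : 2 ≤ d) {AH BH : Type}
    [Fintype AH] [DecidableEq AH] [Fintype BH] [DecidableEq BH]
    (K L M N : Matrix (AH × BH) (AH × BH) ℂ)
    (hK : K.IsHermitian) (hL : L.IsHermitian) (hM : M.IsHermitian) (hN : N.IsHermitian) :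
    (ptB6 (bigOp d (gamOp d) ((((d : ℂ)) ^ 2 - 1)⁻¹ • ((d : ℂ) • 1 - gamOp d)) K L M N)).PosSemidef
      ↔
    ((ptBh2 (K + ((d : ℂ) + 1)⁻¹ • L + ((d : ℂ) + 1)⁻¹ • M +
        (((d : ℂ) + 1) ^ 2)⁻¹ • N)).PosSemidef ∧
      (((d : ℂ) - 1)⁻¹ • ptBh2 (L + ((d : ℂ) + 1)⁻¹ • N) -
        ptBh2 (K + ((d : ℂ) + 1)⁻¹ • M)).PosSemidef ∧
      (((d : ℂ) - 1)⁻¹ • ptBh2 (M + ((d : ℂ) + 1)⁻¹ • N) -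
        ptBh2 (K + ((d : ℂ) + 1)⁻¹ • L)).PosSemidef ∧
      (ptBh2 (K + (((d : ℂ) - 1) ^ 2)⁻¹ • N) -
        ((d : ℂ) - 1)⁻¹ • ptBh2 (L + M)).PosSemidef) := by
  rw [Stmt9Aux.key_eq d hd K L M N, Matrix.posSemidef_submatrix_equiv]
  have ha := Stmt9Aux.star_cast_add_one_inv d
  have ha2 := Stmt9Aux.star_cast_add_one_sq_inv d
  have hb := Stmt9Aux.star_cast_sub_one_inv d
  have hb2 := Stmt9Aux.star_cast_sub_one_sq_inv d
  exact Stmt9Aux.sector_psd_iff d hd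
    (Stmt9Aux.ptBh2_herm (((hK.add (Stmt9Aux.herm_smul ha hL)).add
      (Stmt9Aux.herm_smul ha hM)).add (Stmt9Aux.herm_smul ha2 hN)))
    ((Stmt9Aux.herm_smul hb (Stmt9Aux.ptBh2_herm (hL.add (Stmt9Aux.herm_smul ha hN)))).sub
      (Stmt9Aux.ptBh2_herm (hK.add (Stmt9Aux.herm_smul ha hM))))
    ((Stmt9Aux.herm_smul hb (Stmt9Aux.ptBh2_herm (hM.add (Stmt9Aux.herm_smul ha hN)))).sub
      (Stmt9Aux.ptBh2_herm (hK.add (Stmt9Aux.herm_smul ha hL))))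
    ((Stmt9Aux.ptBh2_herm (hK.add (Stmt9Aux.herm_smul hb2 hN))).sub
      (Stmt9Aux.herm_smul hb (Stmt9Aux.ptBh2_herm (hL.add hM))))


end
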